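/- arXiv:1610.03103 — 2 statements merged into one kernel-verified Lean document; each statement's English description precedes it below -/
import Mathlib

section
/- Let g : ℕ → ℝ with g(n) → ∞. Suppose for each n the sum ∑_{i=0}^{R_n − 1} (a_i + b_i) ≤ g(n), where a_i, b_i are positive integers such that the rationals a_i/b_i are pairwise distinct. Then there exists a constant C₀ > 0 and N such that for all n > N, R_n ≤ C₀ · g(n)^{2/3}. -/
open Filter

theorem aux_cube_bound (x S : ℝ) (hS0 : 0 ≤ S) (hS : S ≤ x) (h1 : 1 ≤ x)
    (R : ℕ) (hR : (R : ℝ)^3 ≤ 64 * S^2) : (R : ℝ) ≤ 8 * x ^ ((2 : ℝ)/3) := by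
  have hx0 : (0:ℝ) ≤ x := le_trans (by norm_num) h1
  have hX : (0:ℝ) ≤ 8 * x ^ ((2:ℝ)/3) := by positivity
  refine le_of_pow_le_pow_left₀ (n := 3) (by norm_num) hX ?_
  have hcube : (8 * x ^ ((2:ℝ)/3))^3 = 512 * x ^ (2:ℕ) := by
    rw [mul_pow, ← Real.rpow_natCast (x ^ ((2:ℝ)/3)) 3, ← Real.rpow_mul hx0,
      show ((2:ℝ)/3) * ((3:ℕ):ℝ) = ((2:ℕ):ℝ) by push_cast; ring, Real.rpow_natCast]
    norm_num
  rw [hcube]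
  have : S^2 ≤ x^2 := by nlinarith
  nlinarith

/-- If `g(n) → ∞` and for each `n` we have `R_n` pairs of positive integers
`(a_i, b_i)` with pairwise distinct ratios `a_i/b_i` and
`∑_{i<R_n} (a_i + b_i) ≤ g(n)`, then eventually `R_n ≤ C₀ · g(n)^{2/3}`. -/
theorem stmt_8 (g : ℕ → ℝ) (hg : Tendsto g atTop atTop)
    (R : ℕ → ℕ) (a b : ℕ → ℕ → ℕ)
    (hpos : ∀ n, ∀ i < R n, 0 < a n i ∧ 0 < b n i)
    (hdistinct : ∀ n, ∀ i < R n, ∀ j < R n, i ≠ j →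
      (a n i : ℚ) / (b n i) ≠ (a n j : ℚ) / (b n j))
    (hsum : ∀ n, (∑ i ∈ Finset.range (R n), ((a n i : ℝ) + b n i)) ≤ g n) :
    ∃ C₀ > (0 : ℝ), ∃ N : ℕ, ∀ n > N, (R n : ℝ) ≤ C₀ * (g n) ^ ((2 : ℝ) / 3) := by
  obtain ⟨N, hN⟩ := (hg.eventually_ge_atTop 1).exists_forall_of_atTop
  refine ⟨8, by norm_num, N, fun n hn => ?_⟩
  have hg1 : (1:ℝ) ≤ g n := hN n (le_of_lt hn)
  set Rn := R n with hRn
  -- nat sum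
  set S : ℕ := ∑ i ∈ Finset.range Rn, (a n i + b n i) with hS
  have hScast : (S : ℝ) = ∑ i ∈ Finset.range Rn, ((a n i : ℝ) + b n i) := by
    rw [hS]; push_cast; ring
  have hSg : (S : ℝ) ≤ g n := by rw [hScast]; exact hsum n
  by_cases hR2 : Rn ≤ 1
  · have : (Rn : ℝ) ≤ 1 := by exact_mod_cast hR2
    have hx : (1:ℝ) ≤ g n ^ ((2:ℝ)/3) :=
      Real.one_le_rpow hg1 (by norm_num)
    nlinarith
  push_neg at hR2
  set M : ℕ := Nat.sqrt (Rn / 2) with hM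
  set T := Finset.range Rn with hT
  set Fl := T.filter (fun i => a n i + b n i ≤ M) with hFl
  -- injectivity counting
  have hcard : Fl.card ≤ M * M := by
    have hle : Fl.card ≤ ((Finset.Icc 1 M) ×ˢ (Finset.Icc 1 M)).card := by
      apply Finset.card_le_card_of_injOn (fun i => (a n i, b n i))
      · intro i hi
        rw [hFl, Finset.mem_coe, Finset.mem_filter, hT, Finset.mem_range] at hi
        obtain ⟨hiR, hleM⟩ := hi
        obtain ⟨ha, hb⟩ := hpos n i hiR
        simp only [Finset.mem_coe, Finset.mem_product, Finset.mem_Icc]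
        omega
      · intro i hi j hj hij
        simp only [Finset.mem_coe, hFl, Finset.mem_filter, hT, Finset.mem_range] at hi hj
        by_contra hne
        apply hdistinct n i hi.1 j hj.1 hne
        have h1 : a n i = a n j := congrArg Prod.fst hij
        have h2 : b n i = b n j := congrArg Prod.snd hij
        rw [h1, h2]
    simpa using hle
  have hsum_nat : (Rn - M * M) * (M + 1) ≤ S := by
    have hc2 : Rn - M * M ≤ (T \ Fl).card := by
      have h1 : (T \ Fl).card = T.card - Fl.card :=
        Finset.card_sdiff_of_subset (Finset.filter_subset _ _)
      have h2 : T.card = Rn := Finset.card_range Rn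
      omega
    calc (Rn - M * M) * (M + 1) ≤ (T \ Fl).card * (M + 1) :=
          Nat.mul_le_mul_right _ hc2
      _ ≤ ∑ i ∈ T \ Fl, (a n i + b n i) := by
          rw [← smul_eq_mul]
          apply Finset.card_nsmul_le_sum
          intro i hi
          rw [Finset.mem_sdiff] at hi
          have hnle : ¬ (a n i + b n i ≤ M) := fun hle =>
            hi.2 (by rw [hFl, Finset.mem_filter]; exact ⟨hi.1, hle⟩)
          omega
      _ ≤ S := Finset.sum_le_sum_of_subset Finset.sdiff_subset
  -- key nat inequalities
  have hM1 : M * M ≤ Rn / 2 := by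
    simpa [pow_two] using Nat.sqrt_le' (Rn / 2)
  have hM2 : Rn / 2 < (M + 1) * (M + 1) := by
    simpa [pow_two, Nat.succ_eq_add_one] using Nat.lt_succ_sqrt' (Rn / 2)
  set q := Rn / 2 with hq
  have hq1 : q * (M + 1) ≤ S := by
    have : q ≤ Rn - M * M := by omega
    calc q * (M+1) ≤ (Rn - M * M) * (M+1) := Nat.mul_le_mul_right _ this
      _ ≤ S := hsum_nat
  have hkey : Rn ^ 3 ≤ 64 * S ^ 2 := by
    have h4q : Rn ≤ 4 * q := by omega
    have hSq : q * q * q ≤ S * S := by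
      calc q * q * q ≤ (q * (M+1)) * (q * (M+1)) := by nlinarith
        _ ≤ S * S := Nat.mul_le_mul hq1 hq1
    calc Rn ^ 3 ≤ (4*q)^3 := Nat.pow_le_pow_left h4q 3
      _ = 64 * (q * q * q) := by ring
      _ ≤ 64 * (S * S) := Nat.mul_le_mul_left _ hSq
      _ = 64 * S ^ 2 := by ring
  have hkeyR : (Rn : ℝ)^3 ≤ 64 * (S:ℝ)^2 := by exact_mod_cast hkey
  exact aux_cube_bound (g n) (S : ℝ) (Nat.cast_nonneg _) hSg hg1 Rn hkeyR
end

section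
/- For p ∈ (0,1), q = 1 − p, a ∈ (0, 1/2], x ∈ ℝ and integer k, let N(n) = (q/p)·n − x·n^a + k. Then n(N) := (p/q)·N + x·(p/q)^{a+1}·N^a satisfies N(n(N)) = N + O(1) as N → ∞; more precisely, |N(n(N)) − N| is bounded for large N. -/
set_option maxHeartbeats 1000000

/-- Mean-value style bound: for `0 ≤ a ≤ 1` and `0 < u ≤ v`,
`v^a - u^a ≤ a * u^(a-1) * (v - u)`. -/
lemma aux_rpow_sub_rpow_le {a u v : ℝ} (ha0 : 0 ≤ a) (ha1 : a ≤ 1) (hu : 0 < u)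
    (huv : u ≤ v) : v ^ a - u ^ a ≤ a * u ^ (a - 1) * (v - u) := by
  have hv : 0 < v := hu.trans_le huv
  have hs : -1 ≤ v / u - 1 := by
    have : 0 ≤ v / u := div_nonneg hv.le hu.le
    linarith
  have h := rpow_one_add_le_one_add_mul_self hs ha0 ha1
  rw [add_sub_cancel] at h
  have hva : v ^ a = u ^ a * (v / u) ^ a := by
    rw [← Real.mul_rpow hu.le (div_nonneg hv.le hu.le)]
    congr 1
    field_simp
  have hua : 0 < u ^ a := Real.rpow_pos_of_pos hu a
  have hu1 : u ^ (a - 1) = u ^ a / u := Real.rpow_sub_one hu.ne' a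
  calc v ^ a - u ^ a = u ^ a * (v / u) ^ a - u ^ a := by rw [← hva]
    _ ≤ u ^ a * (1 + a * (v / u - 1)) - u ^ a := by nlinarith
    _ = a * (u ^ a / u) * (v - u) := by field_simp; ring
    _ = a * u ^ (a - 1) * (v - u) := by rw [hu1]

/-- Two-sided version with `min u v`. -/
lemma aux_abs_rpow_sub_rpow_le {a u v : ℝ} (ha0 : 0 ≤ a) (ha1 : a ≤ 1) (hu : 0 < u)
    (hv : 0 < v) : |u ^ a - v ^ a| ≤ a * (min u v) ^ (a - 1) * |u - v| := by
  rcases le_total u v with h | h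
  · rw [min_eq_left h, abs_sub_comm (u ^ a), abs_sub_comm u v,
      abs_of_nonneg (sub_nonneg.mpr h),
      abs_of_nonneg (sub_nonneg.mpr (Real.rpow_le_rpow hu.le h ha0))]
    exact aux_rpow_sub_rpow_le ha0 ha1 hu h
  · rw [min_eq_right h, abs_of_nonneg (sub_nonneg.mpr h),
      abs_of_nonneg (sub_nonneg.mpr (Real.rpow_le_rpow hv.le h ha0))]
    exact aux_rpow_sub_rpow_le ha0 ha1 hv h

/-- For `N(t) = (q/p)t − x t^a + k` with `0 < a ≤ 1/2`, the approximate inverse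
`n(N) = (p/q)N + x (p/q)^{a+1} N^a` satisfies `N(n(N)) = N + O(1)`:
`|N(n(N)) − N|` is bounded for large `N`. -/
theorem stmt_14 (p a x k : ℝ) (hp : 0 < p) (hp1 : p < 1) (ha : 0 < a) (ha2 : a ≤ 1 / 2) :
    let q := 1 - p
    let Nf : ℝ → ℝ := fun t => (q / p) * t - x * t ^ a + k
    let nf : ℝ → ℝ := fun N => (p / q) * N + x * (p / q) ^ (a + 1) * N ^ a
    ∃ C : ℝ, ∃ N₀ : ℝ, ∀ N ≥ N₀, |Nf (nf N) - N| ≤ C := by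
  intro q Nf nf
  have hq : 0 < q := by simp only [q]; linarith
  set r : ℝ := p / q with hrdef
  have hr : 0 < r := div_pos hp hq
  have ha1 : a ≤ 1 := by linarith
  have hra : (0:ℝ) < r ^ a := Real.rpow_pos_of_pos hr a
  have hra1 : (0:ℝ) < r ^ (a + 1) := Real.rpow_pos_of_pos hr (a + 1)
  refine ⟨|x| * (a * ((r / 2) ^ (a - 1) * (|x| * r ^ (a + 1)))) + |k|,
    max 1 ((2 * |x| * r ^ a) ^ 2), fun N hN => ?_⟩
  have hN1 : (1 : ℝ) ≤ N := le_trans (le_max_left _ _) hN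
  have hN0 : (0 : ℝ) < N := lt_of_lt_of_le one_pos hN1
  set u : ℝ := r * N with hudef
  set v : ℝ := nf N with hvdef
  have hu : 0 < u := mul_pos hr hN0
  have hNa : (0:ℝ) < N ^ a := Real.rpow_pos_of_pos hN0 a
  -- |v - u| is small compared to N
  have hvu : v - u = x * r ^ (a + 1) * N ^ a := by
    simp only [hvdef, hudef, nf]; ring
  have hr1 : r ^ (a + 1) = r ^ a * r := Real.rpow_add_one hr.ne' a
  have hsmall : |v - u| ≤ r / 2 * N := by
    rw [hvu, hr1]
    have h1 : (2 * |x| * r ^ a) ^ 2 ≤ N := le_trans (le_max_right _ _) hN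
    have h2 : N ^ a ≤ N ^ (1/2 : ℝ) := Real.rpow_le_rpow_of_exponent_le hN1 ha2
    have h3 : N ^ (1/2 : ℝ) * N ^ (1/2 : ℝ) = N := by
      rw [← Real.rpow_add hN0]; norm_num
    have hs0 : (0:ℝ) ≤ N ^ (1/2 : ℝ) := Real.rpow_nonneg hN0.le _
    have hc0 : (0:ℝ) ≤ 2 * |x| * r ^ a := by positivity
    have h4 : 2 * |x| * r ^ a ≤ N ^ (1/2 : ℝ) := by
      nlinarith [sq_nonneg (2 * |x| * r ^ a - N ^ (1/2 : ℝ))]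
    have h5 : |x * (r ^ a * r) * N ^ a| = |x| * r ^ a * N ^ a * r := by
      rw [abs_mul, abs_mul, abs_mul, abs_of_pos hra, abs_of_pos hr, abs_of_pos hNa]; ring
    rw [h5]
    have h6 : |x| * r ^ a * N ^ a ≤ N / 2 := by nlinarith [abs_nonneg x]
    nlinarith
  -- hence v is bounded below
  have hvlow : r / 2 * N ≤ v := by
    have := abs_le.mp hsmall
    nlinarith
  have hv : 0 < v := lt_of_lt_of_le (by positivity) hvlow
  have hmin : r / 2 * N ≤ min u v := le_min (by nlinarith) hvlow
  -- the key identity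
  have hqp : q / p * r = 1 := by field_simp [hrdef]; rw [hrdef]; field_simp [hq.ne']
  have hkey : Nf v - N = x * (u ^ a - v ^ a) + k := by
    simp only [Nf, hvdef, hudef, nf]
    have hmr : (r * N) ^ a = r ^ a * N ^ a := Real.mul_rpow hr.le hN0.le
    have : q / p * (r * N + x * r ^ (a + 1) * N ^ a)
        = N + x * r ^ a * N ^ a := by
      rw [hr1]
      have hp' : p ≠ 0 := hp.ne'
      have hq' : q ≠ 0 := hq.ne'
      field_simp [hrdef]
      have hqr : q * r = p := by rw [hrdef]; field_simp [hq']
      rw [hqr]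
    rw [this, hmr]
    ring
  rw [hkey]
  -- bound the power difference
  have hpow : |u ^ a - v ^ a| ≤ a * ((r / 2) ^ (a - 1) * (|x| * r ^ (a + 1))) := by
    have h1 := aux_abs_rpow_sub_rpow_le ha.le ha1 hu hv
    have h2 : (min u v) ^ (a - 1) ≤ (r / 2 * N) ^ (a - 1) :=
      Real.rpow_le_rpow_of_nonpos (by positivity) hmin (by linarith)
    have h3 : (r / 2 * N) ^ (a - 1) = (r / 2) ^ (a - 1) * N ^ (a - 1) :=
      Real.mul_rpow (by positivity) hN0.le
    have h4 : |u - v| = |x| * r ^ (a + 1) * N ^ a := by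
      rw [abs_sub_comm, hvu, abs_mul, abs_mul, abs_of_pos hra1, abs_of_pos hNa]
    have h5 : N ^ (a - 1) * N ^ a ≤ 1 := by
      rw [← Real.rpow_add hN0]
      exact Real.rpow_le_one_of_one_le_of_nonpos hN1 (by linarith)
    have h6 : (0:ℝ) ≤ (r / 2) ^ (a - 1) := Real.rpow_nonneg (by positivity) _
    have h7 : (0:ℝ) < N ^ (a - 1) := Real.rpow_pos_of_pos hN0 _
    calc |u ^ a - v ^ a| ≤ a * (min u v) ^ (a - 1) * |u - v| := h1
      _ ≤ a * ((r / 2) ^ (a - 1) * N ^ (a - 1)) * (|x| * r ^ (a + 1) * N ^ a) := by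
          rw [h4, ← h3]
          have : (0:ℝ) ≤ |x| * r ^ (a + 1) * N ^ a := by positivity
          exact mul_le_mul_of_nonneg_right (mul_le_mul_of_nonneg_left h2 ha.le) this
      _ = a * ((r / 2) ^ (a - 1) * (|x| * r ^ (a + 1))) * (N ^ (a - 1) * N ^ a) := by ring
      _ ≤ a * ((r / 2) ^ (a - 1) * (|x| * r ^ (a + 1))) * 1 := by
          apply mul_le_mul_of_nonneg_left h5; positivity
      _ = a * ((r / 2) ^ (a - 1) * (|x| * r ^ (a + 1))) := by ring
  calc |x * (u ^ a - v ^ a) + k| ≤ |x * (u ^ a - v ^ a)| + |k| := abs_add_le _ _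
    _ = |x| * |u ^ a - v ^ a| + |k| := by rw [abs_mul]
    _ ≤ |x| * (a * ((r / 2) ^ (a - 1) * (|x| * r ^ (a + 1)))) + |k| := by
        have := mul_le_mul_of_nonneg_left hpow (abs_nonneg x)
        linarith
end
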